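/- If f̂(ξ,q,p) and ĝ(ξ,q,p) are convergent power series (elements of C{ξ,q,p}), then their Borel-star product f̂ ∗ ĝ := β(β⁻¹f̂ ⋆_S β⁻¹ĝ) is also a convergent power series in C{ξ,q,p}. Consequently, the space of 1-Gevrey formal series β⁻¹(C{ξ,q,p}) ⊂ C[[t,q,p]] is closed under the standard star product ⋆_S. -/

import Mathlib

open MvPowerSeries

noncomputable section

/-- Formal power series ring `ℂ[[t,q,p]]`, variable `0 = t`, `1 = q`, `2 = p`. -/
abbrev F3 : Type := MvPowerSeries (Fin 3) ℂ

/-- Formal partial derivative with respect to variable `i`. -/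
def pd (i : Fin 3) (f : F3) : F3 :=
  fun n => ((n i : ℂ) + 1) * MvPowerSeries.coeff (n + Finsupp.single i 1) f

/-- Moyal star product
`f ⋆_M g = Σ_k (t^k/(2^k k!)) Σ_{n=0}^k (-1)^(k-n) C(k,n) (∂_p^n ∂_q^(k-n) f)(∂_p^(k-n) ∂_q^n g)`,
written coefficientwise. -/
def starM (f g : F3) : F3 := fun w =>
  ∑ k ∈ Finset.range (w 0 + 1),
    (((2 ^ k * k.factorial : ℕ) : ℂ))⁻¹ *
      MvPowerSeries.coeff (w - Finsupp.single 0 k)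
        (∑ n ∈ Finset.range (k + 1),
          (((-1 : ℂ)) ^ (k - n) * (k.choose n : ℂ)) •
            ((pd 2)^[n] ((pd 1)^[k - n] f) * (pd 2)^[k - n] ((pd 1)^[n] g)))

/-- Standard star product `f ⋆_S g = Σ_k (t^k/k!) (∂_p^k f)(∂_q^k g)`, coefficientwise. -/
def starS (f g : F3) : F3 := fun w =>
  ∑ k ∈ Finset.range (w 0 + 1),
    ((k.factorial : ℂ))⁻¹ *
      MvPowerSeries.coeff (w - Finsupp.single 0 k) ((pd 2)^[k] f * (pd 1)^[k] g)
/-- The formal Borel transform with respect to t (variable 0). -/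
def borelT (f : F3) : F3 := fun w =>
  (((w 0).factorial : ℂ))⁻¹ * MvPowerSeries.coeff w f

/-- The inverse formal Borel transform. -/
def borelTInv (f : F3) : F3 := fun w =>
  ((w 0).factorial : ℂ) * MvPowerSeries.coeff w f

/-- Borel counterpart of the standard star product: f̂ ∗ ĝ := β(β⁻¹f̂ ⋆_S β⁻¹ĝ). -/
def astS (f g : F3) : F3 := borelT (starS (borelTInv f) (borelTInv g))

/-- A formal power series is convergent (an element of ℂ{ξ,q,p}) iff its coefficients
admit a geometric bound. -/
def IsConvergent (f : F3) : Prop :=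
  ∃ C r : ℝ, ∀ n : Fin 3 →₀ ℕ,
    ‖MvPowerSeries.coeff n f‖ ≤ C * r ^ (n.sum fun _ e => e)

def deg (n : Fin 3 →₀ ℕ) : ℕ := n.sum fun _ e => e

lemma deg_add (m n : Fin 3 →₀ ℕ) : deg (m + n) = deg m + deg n :=
  Finsupp.sum_add_index' (fun _ => rfl) (fun _ _ _ => rfl)

lemma deg_single (i : Fin 3) (k : ℕ) : deg (Finsupp.single i k) = k :=
  Finsupp.sum_single_index rfl

lemma deg_eq (n : Fin 3 →₀ ℕ) : deg n = ∑ i : Fin 3, n i :=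
  Finsupp.sum_fintype _ _ (fun _ => rfl)

lemma apply_le_deg (n : Fin 3 →₀ ℕ) (i : Fin 3) : n i ≤ deg n := by
  rw [deg_eq]
  exact Finset.single_le_sum (f := fun j => n j) (fun _ _ => Nat.zero_le _) (Finset.mem_univ i)

lemma fact_mul_prod (a k : ℕ) :
    a.factorial * ∏ j ∈ Finset.range k, (a + j + 1) = (a + k).factorial := by
  induction k with
  | zero => simp
  | succ k ih =>
    rw [Finset.prod_range_succ, ← mul_assoc, ih, ← Nat.add_assoc, Nat.factorial_succ, mul_comm]

lemma choose_le_two_pow (n k : ℕ) : n.choose k ≤ 2 ^ n := by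
  rcases le_or_gt k n with h | h
  · calc n.choose k ≤ ∑ m ∈ Finset.range (n + 1), n.choose m :=
        Finset.single_le_sum (fun _ _ => Nat.zero_le _) (by simp [Finset.mem_range, Nat.lt_succ_of_le h])
    _ = 2 ^ n := Nat.sum_range_choose n
  · rw [Nat.choose_eq_zero_of_lt h]; exact Nat.zero_le _

lemma prod_le_fact_two_pow (a k : ℕ) :
    (∏ j ∈ Finset.range k, (a + j + 1)) ≤ k.factorial * 2 ^ (a + k) := by
  have h := Nat.choose_mul_factorial_mul_factorial (Nat.le_add_left k a)
  have hle : (a + k).factorial ≤ a.factorial * (k.factorial * 2 ^ (a + k)) := by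
    rw [← h]
    have hc : (a + k).choose k ≤ 2 ^ (a + k) := choose_le_two_pow _ _
    have h2 : a + k - k = a := by omega
    calc (a + k).choose k * k.factorial * (a + k - k).factorial
        = a.factorial * (k.factorial * (a + k).choose k) := by rw [h2]; ring
      _ ≤ a.factorial * (k.factorial * 2 ^ (a + k)) :=
          Nat.mul_le_mul_left _ (Nat.mul_le_mul_left _ hc)
  exact Nat.le_of_mul_le_mul_left (by rw [fact_mul_prod]; exact hle) (Nat.factorial_pos a)

lemma coeff_pd_iter (i : Fin 3) (k : ℕ) (F : F3) (m : Fin 3 →₀ ℕ) :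
    ((pd i)^[k] F) m =
      ((∏ j ∈ Finset.range k, (m i + j + 1) : ℕ) : ℂ) * F (m + Finsupp.single i k) := by
  induction k generalizing m with
  | zero => simp
  | succ k ih =>
    rw [Function.iterate_succ_apply']
    show ((m i : ℂ) + 1) * MvPowerSeries.coeff (m + Finsupp.single i 1) ((pd i)^[k] F) = _
    rw [MvPowerSeries.coeff_apply, ih]
    have hidx : m + Finsupp.single i 1 + Finsupp.single i k = m + Finsupp.single i (k + 1) := by
      rw [add_assoc, ← Finsupp.single_add, add_comm 1 k]
    have happ : ((m + Finsupp.single i 1 : Fin 3 →₀ ℕ)) i = m i + 1 := by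
      simp [Finsupp.add_apply]
    rw [hidx, happ]
    have hprod : (∏ j ∈ Finset.range k, (m i + 1 + j + 1)) * (m i + 1)
        = ∏ j ∈ Finset.range (k + 1), (m i + j + 1) := by
      rw [Finset.prod_range_succ' (fun j => m i + j + 1) k]
      congr 1
      exact Finset.prod_congr rfl (fun j _ => by ring)
    rw [← hprod]
    push_cast
    ring

lemma card_antidiagonal_le (w : Fin 3 →₀ ℕ) :
    (Finset.HasAntidiagonal.antidiagonal w).card ≤ 2 ^ deg w := by
  have h1 : (Finset.HasAntidiagonal.antidiagonal w).card ≤ (Finset.Iic w).card := by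
    apply Finset.card_le_card_of_injOn Prod.fst
    · intro p hp
      rw [Finset.mem_coe, Finset.HasAntidiagonal.mem_antidiagonal] at hp
      exact Finset.mem_Iic.2 (hp ▸ self_le_add_right p.1 p.2)
    · intro p hp q hq h
      simp only [Finset.mem_coe, Finset.HasAntidiagonal.mem_antidiagonal] at hp hq
      have h2 : p.2 = q.2 := by
        have := hp.trans hq.symm
        rwa [h, add_right_inj] at this
      exact Prod.ext h h2
  refine h1.trans ?_
  rw [Finsupp.card_Iic]
  calc ∏ i ∈ w.support, (Finset.Iic (w i)).card = ∏ i ∈ w.support, (w i + 1) := by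
        simp [Nat.card_Iic]
    _ ≤ ∏ i ∈ w.support, 2 ^ (w i) := Finset.prod_le_prod' (fun i _ => Nat.lt_two_pow_self)
    _ = 2 ^ ∑ i ∈ w.support, w i := Finset.prod_pow_eq_pow_sum _ _ _
    _ = 2 ^ deg w := rfl

lemma norm_pd_iter_le {F : F3} {C r : ℝ} (hC : 0 ≤ C) (hr : 1 ≤ r)
    (hF : ∀ n, ‖F n‖ ≤ C * (n 0).factorial * r ^ deg n)
    {i : Fin 3} (hi : i ≠ 0) (k : ℕ) (m : Fin 3 →₀ ℕ) :
    ‖((pd i)^[k] F) m‖ ≤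
      ((k.factorial * 2 ^ (m i + k) : ℕ) : ℝ) * (C * (m 0).factorial * r ^ (deg m + k)) := by
  rw [coeff_pd_iter, norm_mul, RCLike.norm_natCast]
  have h0 : ((m + Finsupp.single i k : Fin 3 →₀ ℕ)) 0 = m 0 := by
    simp [Finsupp.add_apply, Finsupp.single_apply_eq_zero.2 (fun h => absurd h.symm hi)]
  have hd : deg (m + Finsupp.single i k) = deg m + k := by rw [deg_add, deg_single]
  have hFb := hF (m + Finsupp.single i k)
  rw [h0, hd] at hFb
  exact mul_le_mul (by exact_mod_cast prod_le_fact_two_pow (m i) k) hFb (norm_nonneg _)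
    (by positivity)

lemma key {F G : F3} {C D r : ℝ} (hC : 0 ≤ C) (hD : 0 ≤ D) (hr : 1 ≤ r)
    (hF : ∀ n, ‖F n‖ ≤ C * (n 0).factorial * r ^ deg n)
    (hG : ∀ n, ‖G n‖ ≤ D * (n 0).factorial * r ^ deg n)
    (w : Fin 3 →₀ ℕ) :
    ‖borelT (starS F G) w‖ ≤ C * D * (64 * r ^ 2) ^ deg w := by
  have hr0 : (0:ℝ) ≤ r := le_trans zero_le_one hr
  set S := deg w with hS
  set A : ℝ := C * D * (2:ℝ) ^ (4 * S) * r ^ (2 * S) with hA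
  have hA0 : 0 ≤ A := by positivity
  have hw0S : w 0 ≤ S := apply_le_deg w 0
  -- inner bound
  have inner : ∀ k ∈ Finset.range (w 0 + 1),
      ‖MvPowerSeries.coeff (w - Finsupp.single 0 k) ((pd 2)^[k] F * (pd 1)^[k] G)‖
        ≤ (k.factorial : ℝ) *
            (((k.factorial * (w 0 - k).factorial : ℕ) : ℝ) * ((2:ℝ) ^ S * A)) := by
    intro k hk
    have hk' : k ≤ w 0 := Nat.lt_succ_iff.mp (Finset.mem_range.mp hk)
    set w' := w - Finsupp.single 0 k with hw'
    have hle : Finsupp.single 0 k ≤ w := Finsupp.single_le_iff.2 hk'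
    have hsum : w' + Finsupp.single 0 k = w := tsub_add_cancel_of_le hle
    have hdegw' : deg w' + k = S := by
      have := deg_add w' (Finsupp.single 0 k)
      rw [hsum, deg_single] at this
      omega
    have hw'0 : w' 0 = w 0 - k := by rw [hw', Finsupp.tsub_apply, Finsupp.single_eq_same]
    rw [MvPowerSeries.coeff_mul]
    refine (norm_sum_le _ _).trans ?_
    have hterm : ∀ p ∈ Finset.HasAntidiagonal.antidiagonal w',
        ‖MvPowerSeries.coeff p.1 ((pd 2)^[k] F) * MvPowerSeries.coeff p.2 ((pd 1)^[k] G)‖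
          ≤ (k.factorial : ℝ) * (((k.factorial * (w 0 - k).factorial : ℕ) : ℝ) * A) := by
      intro p hp
      rw [Finset.HasAntidiagonal.mem_antidiagonal] at hp
      have hdp : deg p.1 + deg p.2 = deg w' := by rw [← deg_add, hp]
      have ha : p.1 2 ≤ S := le_trans (apply_le_deg p.1 2) (by omega)
      have hb : p.2 1 ≤ S := le_trans (apply_le_deg p.2 1) (by omega)
      have h00 : p.1 0 + p.2 0 = w 0 - k := by
        rw [← hw'0, ← hp]; rfl
      rw [MvPowerSeries.coeff_apply, MvPowerSeries.coeff_apply, norm_mul]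
      have h1 := norm_pd_iter_le hC hr hF (i := 2) (by decide) k p.1
      have h2 := norm_pd_iter_le hD hr hG (i := 1) (by decide) k p.2
      have hf12 : ((p.1 0).factorial : ℝ) * ((p.2 0).factorial : ℝ)
          ≤ ((w 0 - k).factorial : ℝ) := by
        have : (p.1 0).factorial * (p.2 0).factorial ∣ (w 0 - k).factorial := by
          rw [← h00]; exact Nat.factorial_mul_factorial_dvd_factorial_add _ _
        exact_mod_cast Nat.le_of_dvd (Nat.factorial_pos _) this
      have h2p : (2:ℝ) ^ (p.1 2 + k) * (2:ℝ) ^ (p.2 1 + k) ≤ (2:ℝ) ^ (4 * S) := by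
        rw [← pow_add]
        exact pow_le_pow_right₀ one_le_two (by omega)
      have hrp : r ^ (deg p.1 + k) * r ^ (deg p.2 + k) ≤ r ^ (2 * S) := by
        rw [← pow_add]
        exact pow_le_pow_right₀ hr (by omega)
      calc ‖((pd 2)^[k] F) p.1‖ * ‖((pd 1)^[k] G) p.2‖
          ≤ (((k.factorial * 2 ^ (p.1 2 + k) : ℕ) : ℝ) *
              (C * (p.1 0).factorial * r ^ (deg p.1 + k))) *
            (((k.factorial * 2 ^ (p.2 1 + k) : ℕ) : ℝ) *
              (D * (p.2 0).factorial * r ^ (deg p.2 + k))) :=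
            mul_le_mul h1 h2 (norm_nonneg _) (by positivity)
        _ = ((k.factorial : ℝ) * (k.factorial : ℝ)) * (C * D) *
              (((p.1 0).factorial : ℝ) * ((p.2 0).factorial : ℝ)) *
              ((2:ℝ) ^ (p.1 2 + k) * (2:ℝ) ^ (p.2 1 + k)) *
              (r ^ (deg p.1 + k) * r ^ (deg p.2 + k)) := by push_cast; ring
        _ ≤ ((k.factorial : ℝ) * (k.factorial : ℝ)) * (C * D) *
              ((w 0 - k).factorial : ℝ) * (2:ℝ) ^ (4 * S) * r ^ (2 * S) := by
            gcongr
        _ = (k.factorial : ℝ) * (((k.factorial * (w 0 - k).factorial : ℕ) : ℝ) * A) := by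
            rw [hA]; push_cast; ring
    refine (Finset.sum_le_card_nsmul _ _ _ hterm).trans ?_
    rw [nsmul_eq_mul]
    have hcard : ((Finset.HasAntidiagonal.antidiagonal w').card : ℝ) ≤ (2:ℝ) ^ S := by
      have := (card_antidiagonal_le w').trans (Nat.pow_le_pow_right (by norm_num) (show deg w' ≤ S by omega))
      exact_mod_cast this
    calc ((Finset.HasAntidiagonal.antidiagonal w').card : ℝ) *
          ((k.factorial : ℝ) * (((k.factorial * (w 0 - k).factorial : ℕ) : ℝ) * A))
        ≤ (2:ℝ) ^ S * ((k.factorial : ℝ) * (((k.factorial * (w 0 - k).factorial : ℕ) : ℝ) * A)) :=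
          mul_le_mul_of_nonneg_right hcard (by positivity)
      _ = (k.factorial : ℝ) * (((k.factorial * (w 0 - k).factorial : ℕ) : ℝ) * ((2:ℝ) ^ S * A)) := by
          ring
  -- outer
  have hne : ((w 0).factorial : ℝ) ≠ 0 := Nat.cast_ne_zero.2 (Nat.factorial_ne_zero _)
  have hnorm : ‖borelT (starS F G) w‖
      = (((w 0).factorial : ℝ))⁻¹ * ‖starS F G w‖ := by
    show ‖(((w 0).factorial : ℂ))⁻¹ * MvPowerSeries.coeff w (starS F G)‖ = _
    rw [norm_mul, norm_inv, RCLike.norm_natCast, MvPowerSeries.coeff_apply]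
  rw [hnorm]
  have houter : ‖starS F G w‖ ≤ (w 0 + 1 : ℝ) * (((w 0).factorial : ℝ) * ((2:ℝ) ^ S * A)) := by
    have hb : ∀ k ∈ Finset.range (w 0 + 1),
        ‖((k.factorial : ℂ))⁻¹ *
          MvPowerSeries.coeff (w - Finsupp.single 0 k) ((pd 2)^[k] F * (pd 1)^[k] G)‖
        ≤ ((w 0).factorial : ℝ) * ((2:ℝ) ^ S * A) := by
      intro k hk
      have hk' : k ≤ w 0 := Nat.lt_succ_iff.mp (Finset.mem_range.mp hk)
      have hkne : ((k.factorial : ℝ)) ≠ 0 := Nat.cast_ne_zero.2 (Nat.factorial_ne_zero _)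
      rw [norm_mul, norm_inv, RCLike.norm_natCast]
      calc ((k.factorial : ℝ))⁻¹ * ‖MvPowerSeries.coeff (w - Finsupp.single 0 k)
            ((pd 2)^[k] F * (pd 1)^[k] G)‖
          ≤ ((k.factorial : ℝ))⁻¹ * ((k.factorial : ℝ) *
              (((k.factorial * (w 0 - k).factorial : ℕ) : ℝ) * ((2:ℝ) ^ S * A))) :=
            mul_le_mul_of_nonneg_left (inner k hk) (by positivity)
        _ = ((k.factorial * (w 0 - k).factorial : ℕ) : ℝ) * ((2:ℝ) ^ S * A) :=
            inv_mul_cancel_left₀ hkne _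
        _ ≤ ((w 0).factorial : ℝ) * ((2:ℝ) ^ S * A) := by
            refine mul_le_mul_of_nonneg_right ?_ (by positivity)
            have hnat : k.factorial * (w 0 - k).factorial ≤ (w 0).factorial := by
              have hch := Nat.choose_mul_factorial_mul_factorial hk'
              have hpos : 1 ≤ (w 0).choose k := Nat.choose_pos hk'
              calc k.factorial * (w 0 - k).factorial
                  ≤ (w 0).choose k * (k.factorial * (w 0 - k).factorial) :=
                    Nat.le_mul_of_pos_left _ hpos
                _ = (w 0).factorial := by rw [← hch]; ring
            exact_mod_cast hnat
    calc ‖starS F G w‖ ≤ ∑ k ∈ Finset.range (w 0 + 1), ‖((k.factorial : ℂ))⁻¹ *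
            MvPowerSeries.coeff (w - Finsupp.single 0 k) ((pd 2)^[k] F * (pd 1)^[k] G)‖ :=
          norm_sum_le _ _
      _ ≤ (Finset.range (w 0 + 1)).card • (((w 0).factorial : ℝ) * ((2:ℝ) ^ S * A)) :=
          Finset.sum_le_card_nsmul _ _ _ hb
      _ = (w 0 + 1 : ℝ) * (((w 0).factorial : ℝ) * ((2:ℝ) ^ S * A)) := by
          rw [Finset.card_range, nsmul_eq_mul]; push_cast; ring
  calc (((w 0).factorial : ℝ))⁻¹ * ‖starS F G w‖
      ≤ (((w 0).factorial : ℝ))⁻¹ *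
          ((w 0 + 1 : ℝ) * (((w 0).factorial : ℝ) * ((2:ℝ) ^ S * A))) :=
        mul_le_mul_of_nonneg_left houter (by positivity)
    _ = (w 0 + 1 : ℝ) * ((2:ℝ) ^ S * A) := by
        field_simp
    _ ≤ (2:ℝ) ^ S * ((2:ℝ) ^ S * A) := by
        refine mul_le_mul_of_nonneg_right ?_ (by positivity)
        have h1 : w 0 + 1 ≤ 2 ^ S := by
          have := Nat.lt_two_pow_self (n := S)
          omega
        exact_mod_cast h1
    _ = C * D * (64 * r ^ 2) ^ S := by
        rw [hA, mul_pow]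
        have h64 : (64:ℝ) ^ S = (2:ℝ) ^ S * (2:ℝ) ^ S * (2:ℝ) ^ (4 * S) := by
          rw [← pow_add, ← pow_add]
          rw [show (64:ℝ) = 2 ^ 6 by norm_num, ← pow_mul]
          congr 1
          omega
        rw [h64, ← pow_mul r 2 S, mul_comm 2 S, pow_mul]
        ring


lemma borel_bound {F : F3} (h : IsConvergent (borelT F)) :
    ∃ C r : ℝ, 0 ≤ C ∧ 1 ≤ r ∧ ∀ n, ‖F n‖ ≤ C * (n 0).factorial * r ^ deg n := by
  obtain ⟨C, r, hCr⟩ := h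
  refine ⟨|C|, max |r| 1, abs_nonneg C, le_max_right _ _, fun n => ?_⟩
  have hne : ((n 0).factorial : ℂ) ≠ 0 := Nat.cast_ne_zero.2 (Nat.factorial_ne_zero _)
  have h1 : ‖borelT F n‖ ≤ |C| * (max |r| 1) ^ deg n := by
    calc ‖borelT F n‖ = ‖MvPowerSeries.coeff n (borelT F)‖ := by
          rw [MvPowerSeries.coeff_apply]
      _ ≤ C * r ^ deg n := hCr n
      _ ≤ |C * r ^ deg n| := le_abs_self _
      _ = |C| * |r| ^ deg n := by rw [abs_mul, abs_pow]
      _ ≤ |C| * (max |r| 1) ^ deg n := by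
          gcongr
          exact le_max_left _ _
  have h2 : F n = ((n 0).factorial : ℂ) * borelT F n := by
    show F n = ((n 0).factorial : ℂ) * (((n 0).factorial : ℂ)⁻¹ * MvPowerSeries.coeff n F)
    rw [MvPowerSeries.coeff_apply, mul_inv_cancel_left₀ hne]
  calc ‖F n‖ = ((n 0).factorial : ℝ) * ‖borelT F n‖ := by
        rw [h2, norm_mul, RCLike.norm_natCast]
    _ ≤ ((n 0).factorial : ℝ) * (|C| * (max |r| 1) ^ deg n) :=
        mul_le_mul_of_nonneg_left h1 (by positivity)
    _ = |C| * (n 0).factorial * (max |r| 1) ^ deg n := by ring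

/-- If f̂ and ĝ are convergent, so is f̂ ∗ ĝ; consequently the space of 1-Gevrey series
β⁻¹(ℂ{ξ,q,p}) is closed under the standard star product. -/
theorem astS_convergent :
    (∀ f g : F3, IsConvergent f → IsConvergent g → IsConvergent (astS f g)) ∧
    (∀ F G : F3, IsConvergent (borelT F) → IsConvergent (borelT G) →
      IsConvergent (borelT (starS F G))) := by
  have main : ∀ F G : F3, IsConvergent (borelT F) → IsConvergent (borelT G) →
      IsConvergent (borelT (starS F G)) := by
    intro F G hF hG
    obtain ⟨C, rC, hC0, hrC, hFb⟩ := borel_bound hF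
    obtain ⟨D, rD, hD0, hrD, hGb⟩ := borel_bound hG
    set r := max rC rD with hrdef
    have hr : 1 ≤ r := le_trans hrC (le_max_left _ _)
    have hrC0 : (0:ℝ) ≤ rC := le_trans zero_le_one hrC
    have hrD0 : (0:ℝ) ≤ rD := le_trans zero_le_one hrD
    have hFb' : ∀ n, ‖F n‖ ≤ C * (n 0).factorial * r ^ deg n := fun n =>
      (hFb n).trans (by gcongr; exact le_max_left _ _)
    have hGb' : ∀ n, ‖G n‖ ≤ D * (n 0).factorial * r ^ deg n := fun n =>
      (hGb n).trans (by gcongr; exact le_max_right _ _)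
    exact ⟨C * D, 64 * r ^ 2, fun n => by
      rw [MvPowerSeries.coeff_apply]
      exact key hC0 hD0 hr hFb' hGb' n⟩
  refine ⟨?_, main⟩
  intro f g hf hg
  have hid : ∀ h : F3, borelT (borelTInv h) = h := by
    intro h
    funext w
    have hne : ((w 0).factorial : ℂ) ≠ 0 := Nat.cast_ne_zero.2 (Nat.factorial_ne_zero _)
    show (((w 0).factorial : ℂ))⁻¹ * MvPowerSeries.coeff w (borelTInv h) = h w
    rw [MvPowerSeries.coeff_apply]
    show _ * (((w 0).factorial : ℂ) * MvPowerSeries.coeff w h) = h w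
    rw [inv_mul_cancel_left₀ hne, MvPowerSeries.coeff_apply]
  show IsConvergent (borelT (starS (borelTInv f) (borelTInv g)))
  exact main _ _ (by rw [hid]; exact hf) (by rw [hid]; exact hg)


end
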